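/- In SL(2,ℂ), let A = [[ω, 1],[0, ω²]] and B = [[ω, 0],[z, ω²]] where ω is a primitive cube root of unity and z ∈ ℂ. Then tr(AB) = z − 1, and the image of AB in PSL(2,ℂ) has order 6 if and only if tr(AB)² = 3, i.e. z = 1 + √3 or z = 1 − √3. -/

import Mathlib

open Matrix

/-- `PSL(2,ℂ)` as the quotient of `SL(2,ℂ)` by its center. -/
abbrev PSL2C := SpecialLinearGroup (Fin 2) ℂ ⧸ Subgroup.center (SpecialLinearGroup (Fin 2) ℂ)

/-- for `A = [[ω,1],[0,ω²]]`, `B = [[ω,0],[z,ω²]]` with `ω` a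
primitive cube root of unity, `tr(AB) = z − 1`, and the image of `AB` in
`PSL(2,ℂ)` has order 6 iff `tr(AB)² = 3`, i.e. iff `z = 1 + √3` or `z = 1 − √3`. -/
theorem stmt14 (ω z : ℂ) (hω : ω ^ 3 = 1) (hω1 : ω ≠ 1)
    (A B : Matrix (Fin 2) (Fin 2) ℂ)
    (hA : A = !![ω, 1; 0, ω ^ 2]) (hB : B = !![ω, 0; z, ω ^ 2]) :
    Matrix.trace (A * B) = z - 1 ∧
    (∀ M : SpecialLinearGroup (Fin 2) ℂ, (M : Matrix (Fin 2) (Fin 2) ℂ) = A * B →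
      (orderOf ((QuotientGroup.mk M : PSL2C)) = 6 ↔ Matrix.trace (A * B) ^ 2 = 3)) ∧
    ((z - 1) ^ 2 = 3 ↔ z = 1 + (Real.sqrt 3 : ℂ) ∨ z = 1 - (Real.sqrt 3 : ℂ)) := by
  have hs : ω ^ 2 + ω + 1 = 0 := by
    have h1 : (ω - 1) * (ω ^ 2 + ω + 1) = 0 := by linear_combination hω
    rcases mul_eq_zero.mp h1 with h | h
    · exact absurd (by linear_combination h) hω1
    · exact h
  have hω1' : 1 + ω ≠ 0 := by
    intro h
    have hm : ω = -1 := by linear_combination h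
    rw [hm] at hω; norm_num at hω
  -- the explicit product matrix
  set N : Matrix (Fin 2) (Fin 2) ℂ := !![z + ω ^ 2, ω ^ 2; ω ^ 2 * z, ω] with hN
  have hAB : A * B = N := by
    subst hA hB
    ext i j
    fin_cases i <;> fin_cases j <;>
      simp [hN, Matrix.mul_apply, Fin.sum_univ_two]
    · ring
    · linear_combination ω * hω
  have htr : Matrix.trace (A * B) = z - 1 := by
    rw [hAB]
    simp [hN, Matrix.trace_fin_two]
    linear_combination hs
  -- squares and cubes of N
  have e2 : N * N =
      !![z ^ 2 - 2 * z + ω - ω * z, 1 - z + ω - ω * z;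
         z - z ^ 2 + ω * z - ω * z ^ 2, -1 - ω + ω * z] := by
    ext i j
    fin_cases i <;> fin_cases j <;>
      simp [hN, Matrix.mul_apply, Fin.sum_univ_two]
    · linear_combination (2 * z - ω - ω * z + ω ^ 2 + ω ^ 2 * z) * hs
    · linear_combination (-1 + z + ω ^ 2) * hs
    · linear_combination (-z + z ^ 2 + ω ^ 2 * z) * hs
    · linear_combination (1 - ω * z + ω ^ 2 * z) * hs
  have e3 : N * N * N =
      !![1 + z - 3 * z ^ 2 + z ^ 3 + 2 * ω * z - ω * z ^ 2,
         2 * z - z ^ 2 + 2 * ω * z - ω * z ^ 2;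
         2 * z ^ 2 - z ^ 3 + 2 * ω * z ^ 2 - ω * z ^ 3,
         1 - z - 2 * ω * z + ω * z ^ 2] := by
    rw [e2]
    ext i j
    fin_cases i <;> fin_cases j <;>
      simp [hN, Matrix.mul_apply, Fin.sum_univ_two]
    · linear_combination (-1 - z + z ^ 2 + ω - ω * z ^ 2) * hs
    · linear_combination (-2 * z + z ^ 2 + ω - ω * z) * hs
    · linear_combination (-z ^ 2 : ℂ) * hs
    · linear_combination (-1 + z + ω * z - ω * z ^ 2) * hs
  have e6 : (N * N * N) * (N * N * N) =
      !![1 + 2 * z - 9 * z ^ 2 + 10 * z ^ 4 - 6 * z ^ 5 + z ^ 6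
           + ω * (4 * z - 2 * z ^ 2 - 6 * z ^ 3 + 5 * z ^ 4 - z ^ 5),
         (1 + ω) * (4 * z - 2 * z ^ 2 - 6 * z ^ 3 + 5 * z ^ 4 - z ^ 5);
         (1 + ω) * (4 * z ^ 2 - 2 * z ^ 3 - 6 * z ^ 4 + 5 * z ^ 5 - z ^ 6),
         1 - 2 * z - 3 * z ^ 2 + 4 * z ^ 3 - z ^ 4
           - ω * (4 * z - 2 * z ^ 2 - 6 * z ^ 3 + 5 * z ^ 4 - z ^ 5)] := by
    rw [e3]
    ext i j
    fin_cases i <;> fin_cases j <;>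
      simp [Matrix.mul_apply, Fin.sum_univ_two]
    · linear_combination (4 * z ^ 2 - 3 * z ^ 4 + z ^ 5) * hs
    · ring
    · ring
    · linear_combination (4 * z ^ 2 - 3 * z ^ 4 + z ^ 5) * hs
  -- center helpers
  have hcen01 : ∀ X : SpecialLinearGroup (Fin 2) ℂ,
      X ∈ Subgroup.center (SpecialLinearGroup (Fin 2) ℂ) →
      (X : Matrix (Fin 2) (Fin 2) ℂ) 0 1 = 0 := by
    intro X hX
    obtain ⟨r, -, hr⟩ := Matrix.SpecialLinearGroup.mem_center_iff.mp hX
    rw [← hr]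
    simp [Matrix.scalar_apply, Matrix.diagonal_apply]
  have hcen_of : ∀ (X : SpecialLinearGroup (Fin 2) ℂ) (r : ℂ), r ^ 2 = 1 →
      (X : Matrix (Fin 2) (Fin 2) ℂ) = !![r, 0; 0, r] →
      X ∈ Subgroup.center (SpecialLinearGroup (Fin 2) ℂ) := by
    intro X r hr h
    refine Matrix.SpecialLinearGroup.mem_center_iff.mpr ⟨r, by simpa using hr, ?_⟩
    rw [h]
    ext i j
    fin_cases i <;> fin_cases j <;>
      simp [Matrix.scalar_apply, Matrix.diagonal_apply]
  refine ⟨htr, ?_, ?_⟩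
  · intro M hM
    rw [htr]
    have hMN : (M : Matrix (Fin 2) (Fin 2) ℂ) = N := hM.trans hAB
    have hc6 : ((M : Matrix (Fin 2) (Fin 2) ℂ)) ^ 6 = (N * N * N) * (N * N * N) := by
      rw [hMN, show (6:ℕ) = 3 * 2 from rfl, pow_mul, sq, pow_succ, sq]
    have hc2 : ((M : Matrix (Fin 2) (Fin 2) ℂ)) ^ 2 = N * N := by rw [hMN, sq]
    have hc3 : ((M : Matrix (Fin 2) (Fin 2) ℂ)) ^ 3 = N * N * N := by rw [hMN, pow_succ, sq]
    constructor
    · intro h6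
      have hpow : (QuotientGroup.mk M : PSL2C) ^ 6 = 1 := by
        rw [← h6]; exact pow_orderOf_eq_one _
      have hcen : M ^ 6 ∈ Subgroup.center (SpecialLinearGroup (Fin 2) ℂ) :=
        (QuotientGroup.eq_one_iff _).mp (by rw [QuotientGroup.mk_pow]; exact hpow)
      have h01 : ((M : Matrix (Fin 2) (Fin 2) ℂ) ^ 6) 0 1 = 0 := by
        have := hcen01 _ hcen
        rwa [Matrix.SpecialLinearGroup.coe_pow] at this
      rw [hc6, e6] at h01
      simp only [Matrix.cons_val', Matrix.cons_val_zero, Matrix.cons_val_one,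
        Matrix.head_cons, Matrix.empty_val', Matrix.cons_val_fin_one, Matrix.head_fin_const,
        Matrix.of_apply] at h01
      have hE : (1 + ω) * ((z - 1) * (((z - 1) ^ 2 - 1) * ((z - 1) ^ 2 - 3))) = 0 := by
        linear_combination -h01
      have hp := (mul_eq_zero.mp hE).resolve_left hω1'
      rcases mul_eq_zero.mp hp with hz | hp2
      · exfalso
        -- z = 1 : then M² = -1, so the order divides 2
        have e2' : N * N = !![(-1 : ℂ), 0; 0, -1] := by
          rw [e2]
          ext i j
          fin_cases i <;> fin_cases j <;> simp
          · linear_combination (-1 + z - ω) * hz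
          · linear_combination (-1 - ω) * hz
          · linear_combination (-z - ω * z) * hz
          · linear_combination ω * hz
        have hmem : M ^ 2 ∈ Subgroup.center (SpecialLinearGroup (Fin 2) ℂ) := by
          refine hcen_of _ (-1) (by norm_num) ?_
          rw [Matrix.SpecialLinearGroup.coe_pow, hc2, e2']
        have hdvd : (6 : ℕ) ∣ 2 := by
          rw [← h6]
          exact orderOf_dvd_of_pow_eq_one
            (by rw [← QuotientGroup.mk_pow]; exact (QuotientGroup.eq_one_iff _).mpr hmem)
        norm_num at hdvd
      rcases mul_eq_zero.mp hp2 with h1' | h3'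
      · exfalso
        -- (z-1)² = 1 : then M³ is central, so the order divides 3
        have e3' : N * N * N = !![1 - z, 0; 0, 1 - z] := by
          rw [e3]
          ext i j
          fin_cases i <;> fin_cases j <;> simp
          · linear_combination (-1 + z - ω) * h1'
          · linear_combination (-1 - ω) * h1'
          · linear_combination (-z - ω * z) * h1'
          · linear_combination ω * h1'
        have hmem : M ^ 3 ∈ Subgroup.center (SpecialLinearGroup (Fin 2) ℂ) := by
          refine hcen_of _ (1 - z) (by linear_combination h1') ?_
          rw [Matrix.SpecialLinearGroup.coe_pow, hc3, e3']
        have hdvd : (6 : ℕ) ∣ 3 := by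
          rw [← h6]
          exact orderOf_dvd_of_pow_eq_one
            (by rw [← QuotientGroup.mk_pow]; exact (QuotientGroup.eq_one_iff _).mpr hmem)
        norm_num at hdvd
      · linear_combination h3'
    · intro ht2
      -- M⁶ = -1 so the image has order dividing 6
      have e6' : (N * N * N) * (N * N * N) = !![(-1 : ℂ), 0; 0, -1] := by
        rw [e6]
        ext i j
        fin_cases i <;> fin_cases j <;> simp
        · linear_combination
            (-1 + 4 * z ^ 2 - 4 * z ^ 3 + z ^ 4 - 2 * ω * z + 3 * ω * z ^ 2 - ω * z ^ 3) * ht2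
        · right; linear_combination (-(z - 1) * ((z - 1) ^ 2 - 1)) * ht2
        · right; linear_combination (-z * (z - 1) * ((z - 1) ^ 2 - 1)) * ht2
        · linear_combination
            (-1 + 2 * z - z ^ 2 + 2 * ω * z - 3 * ω * z ^ 2 + ω * z ^ 3) * ht2
      have hmem6 : M ^ 6 ∈ Subgroup.center (SpecialLinearGroup (Fin 2) ℂ) := by
        refine hcen_of _ (-1) (by norm_num) ?_
        rw [Matrix.SpecialLinearGroup.coe_pow, hc6, e6']
      have hdvd : orderOf (QuotientGroup.mk M : PSL2C) ∣ 6 :=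
        orderOf_dvd_of_pow_eq_one
          (by rw [← QuotientGroup.mk_pow]; exact (QuotientGroup.eq_one_iff _).mpr hmem6)
      -- order does not divide 2 or 3
      have hx2 : (QuotientGroup.mk M : PSL2C) ^ 2 ≠ 1 := by
        intro h
        have hmem : M ^ 2 ∈ Subgroup.center (SpecialLinearGroup (Fin 2) ℂ) :=
          (QuotientGroup.eq_one_iff _).mp (by rw [QuotientGroup.mk_pow]; exact h)
        have h01 := hcen01 _ hmem
        rw [Matrix.SpecialLinearGroup.coe_pow, hc2, e2] at h01
        simp only [Matrix.cons_val', Matrix.cons_val_zero, Matrix.cons_val_one,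
          Matrix.head_cons, Matrix.empty_val', Matrix.cons_val_fin_one, Matrix.head_fin_const,
          Matrix.of_apply] at h01
        have : (1 + ω) * (1 - z) = 0 := by linear_combination h01
        have hz1 : z = 1 := by
          rcases mul_eq_zero.mp this with h' | h'
          · exact absurd h' hω1'
          · linear_combination -h'
        rw [hz1] at ht2
        norm_num at ht2
      have hx3 : (QuotientGroup.mk M : PSL2C) ^ 3 ≠ 1 := by
        intro h
        have hmem : M ^ 3 ∈ Subgroup.center (SpecialLinearGroup (Fin 2) ℂ) :=
          (QuotientGroup.eq_one_iff _).mp (by rw [QuotientGroup.mk_pow]; exact h)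
        have h01 := hcen01 _ hmem
        rw [Matrix.SpecialLinearGroup.coe_pow, hc3, e3] at h01
        simp only [Matrix.cons_val', Matrix.cons_val_zero, Matrix.cons_val_one,
          Matrix.head_cons, Matrix.empty_val', Matrix.cons_val_fin_one, Matrix.head_fin_const,
          Matrix.of_apply] at h01
        have hE3 : (1 + ω) * ((z - 1) ^ 2 - 1) = 0 := by linear_combination -h01
        have h' := (mul_eq_zero.mp hE3).resolve_left hω1'
        rw [ht2] at h'
        norm_num at h'
      have h2' : ¬ orderOf (QuotientGroup.mk M : PSL2C) ∣ 2 :=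
        fun h => hx2 (orderOf_dvd_iff_pow_eq_one.mp h)
      have h3' : ¬ orderOf (QuotientGroup.mk M : PSL2C) ∣ 3 :=
        fun h => hx3 (orderOf_dvd_iff_pow_eq_one.mp h)
      obtain ⟨d, hd⟩ : ∃ d, orderOf (QuotientGroup.mk M : PSL2C) = d := ⟨_, rfl⟩
      rw [hd] at hdvd h2' h3' ⊢
      have hd6 : d ≤ 6 := Nat.le_of_dvd (by norm_num) hdvd
      have hd1 : 0 < d := Nat.pos_of_dvd_of_pos hdvd (by norm_num)
      interval_cases d
      · exact absurd (by norm_num) h2'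
      · exact absurd (by norm_num) h2'
      · exact absurd (by norm_num) h3'
      · exact absurd hdvd (by norm_num)
      · exact absurd hdvd (by norm_num)
      · rfl
  · have hs3 : ((Real.sqrt 3 : ℝ) : ℂ) ^ 2 = 3 := by
      norm_cast
      rw [Real.sq_sqrt] <;> norm_num
    constructor
    · intro h
      have hfac : (z - 1 - (Real.sqrt 3 : ℂ)) * (z - 1 + (Real.sqrt 3 : ℂ)) = 0 := by
        linear_combination h - hs3
      rcases mul_eq_zero.mp hfac with h' | h'
      · left; linear_combination h'
      · right; linear_combination h'
    · rintro (h | h) <;> rw [h] <;> linear_combination hs3
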